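/- Let A_g, B_g, M_X, R_D, F₁, F₂ > 0 with A_g < B_g, let I_g = [A_g/B_g, B_g/A_g], and define ρ(z) = z^{−1} ln(1+z) − 1 for z ≠ 0 and ρ(0) = 0, ρ₀ = sup_{t ∈ I_g} |ρ(t−1)|, ρ₁ = sup_{t ∈ I_g} |ρ'(t−1)|, ψ₃ = min(2F₁, F₂ M_X R_D/2)/A_g, and ψ₆ = 2(ρ₀ + ψ₃ M_X ρ₁). Let g(s, t) = s ρ(t) and J = { (s, t−1) : |s| ≤ ψ₃ M_X, t ∈ I_g }. Then g is (ψ₆/2, ℓ∞)-Lipschitz on J, and |g(s, t)| ≤ (ψ₆/2) min(|s|, |t|) for all (s, t) ∈ J. -/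

import Mathlib

open Set Filter

private lemma analyticAt_log_one_add {x : ℝ} (hx : -1 < x) :
    AnalyticAt ℝ (fun z : ℝ => Real.log (1 + z)) x := by
  have h1 : AnalyticAt ℂ (fun w : ℂ => Complex.log (1 + w)) (x : ℂ) := by
    have fa : AnalyticAt ℂ (fun w : ℂ => 1 + w) (x : ℂ) := by
      exact analyticAt_const.add analyticAt_id
    apply fa.clog
    refine Complex.mem_slitPlane_iff.mpr (Or.inl ?_)
    have : ((1:ℂ) + (x:ℂ)).re = 1 + x := by simp [Complex.add_re]
    rw [this]; linarith
  have h3 : AnalyticAt ℝ (fun z : ℝ => Complex.log (1 + (z : ℂ))) x :=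
    h1.restrictScalars.comp (Complex.ofRealCLM.analyticAt x)
  have h4 : AnalyticAt ℝ (fun z : ℝ => (Complex.log (1 + (z : ℂ))).re) x :=
    (Complex.reCLM.analyticAt _).comp h3
  refine h4.congr ?_
  filter_upwards [isOpen_Ioi.eventually_mem (show x ∈ Ioi (-1 : ℝ) from hx)] with z hz
  have h5 : (1 : ℂ) + (z : ℂ) = ((1 + z : ℝ) : ℂ) := by push_cast; ring
  rw [h5, Complex.log_ofReal_re]

private lemma rho_props (ρ : ℝ → ℝ)
    (hρ : ∀ z : ℝ, ρ z = if z = 0 then 0 else Real.log (1 + z) / z - 1) :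
    (∀ x ∈ Ioi (-1 : ℝ), DifferentiableAt ℝ ρ x) ∧
    ContinuousOn ρ (Ioi (-1 : ℝ)) ∧ ContinuousOn (deriv ρ) (Ioi (-1 : ℝ)) := by
  set L : ℝ → ℝ := fun z => Real.log (1 + z) with hL
  set h : ℝ → ℝ := fun z => dslope L 0 z - 1 with hh
  have hLan : ∀ x ∈ Ioi (-1 : ℝ), AnalyticAt ℝ L x := fun x hx => analyticAt_log_one_add hx
  have hd0 : AnalyticAt ℝ (dslope L 0) 0 := by
    obtain ⟨p, hp⟩ := hLan 0 (by norm_num)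
    exact ⟨_, hp.has_fpower_series_dslope_fslope⟩
  have hdsl : ∀ x ∈ Ioi (-1 : ℝ), AnalyticAt ℝ (dslope L 0) x := by
    intro x hx
    rcases eq_or_ne x 0 with rfl | hx0
    · exact hd0
    · have h1 : AnalyticAt ℝ (fun z : ℝ => (z - 0)⁻¹ * (L z - L 0)) x := by
        exact ((analyticAt_id.sub analyticAt_const).inv (sub_ne_zero.mpr hx0)).mul
          ((hLan x hx).sub analyticAt_const)
      refine h1.congr ?_
      filter_upwards [isOpen_ne.eventually_mem hx0] with z hz
      rw [dslope_of_ne _ hz, slope_def_field]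
      field_simp
  have hhan : ∀ x ∈ Ioi (-1 : ℝ), AnalyticAt ℝ h x := fun x hx =>
    (hdsl x hx).sub analyticAt_const
  have hderivL0 : deriv L 0 = 1 := by
    have h1 : HasDerivAt (fun z : ℝ => 1 + z) 1 0 := by
      simpa using (hasDerivAt_id (0:ℝ)).const_add 1
    have h2 : HasDerivAt L ((1 + (0:ℝ))⁻¹ * 1) 0 :=
      (Real.hasDerivAt_log (by norm_num)).comp 0 h1
    simpa using h2.deriv
  have hEq : EqOn ρ h (Ioi (-1 : ℝ)) := by
    intro x _
    rcases eq_or_ne x 0 with rfl | hx0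
    · simp [hρ 0, hh, dslope_same, hderivL0]
    · rw [hρ x, if_neg hx0, hh]
      simp only [dslope_of_ne _ hx0, slope_def_field]
      have : L 0 = 0 := by simp [hL]
      rw [this]
      simp only [hL]; ring_nf
  have hfeq : ∀ x ∈ Ioi (-1 : ℝ), ρ =ᶠ[nhds x] h := fun x hx => by
    filter_upwards [isOpen_Ioi.eventually_mem hx] with z hz using hEq hz
  have hdiff : ∀ x ∈ Ioi (-1 : ℝ), DifferentiableAt ℝ ρ x := fun x hx =>
    (hfeq x hx).symm.differentiableAt_iff.mp (hhan x hx).differentiableAt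
  refine ⟨hdiff, ?_, ?_⟩
  · exact ContinuousOn.congr (fun x hx => (hhan x hx).continuousAt.continuousWithinAt) hEq
  · have hda : ContinuousOn (deriv h) (Ioi (-1 : ℝ)) :=
      (AnalyticOnNhd.deriv fun x hx => hhan x hx).continuousOn
    refine hda.congr fun x hx => (hfeq x hx).deriv_eq



open Classical in
/-- bivariate Lipschitz property of `g(s,t) = s ρ(t)` on the set
`J = {(s, t - 1) : |s| ≤ ψ₃ M_X, t ∈ I_g}` (Lemma on bivariate Lipschitz continuity).
Here `ρ(z) = z⁻¹ ln(1+z) - 1` for `z ≠ 0`, `ρ(0) = 0`, `ρ'` is formalized as `deriv ρ`,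
and `ρ₀, ρ₁` are the suprema of `|ρ(t-1)|`, `|ρ'(t-1)|` over `t ∈ I_g`. -/
theorem stmt18 (Ag Bg MX RD F1 F2 : ℝ)
    (hAg : 0 < Ag) (hAB : Ag < Bg) (hMX : 0 < MX) (hRD : 0 < RD)
    (hF1 : 0 < F1) (hF2 : 0 < F2)
    (ρ : ℝ → ℝ)
    (hρ : ∀ z : ℝ, ρ z = if z = 0 then 0 else Real.log (1 + z) / z - 1)
    (ρ0 ρ1 ψ3 ψ6 : ℝ)
    (hρ0 : ρ0 = ⨆ t : Set.Icc (Ag / Bg) (Bg / Ag), |ρ (t.1 - 1)|)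
    (hρ1 : ρ1 = ⨆ t : Set.Icc (Ag / Bg) (Bg / Ag), |deriv ρ (t.1 - 1)|)
    (hψ3 : ψ3 = min (2 * F1) (F2 * MX * RD / 2) / Ag)
    (hψ6 : ψ6 = 2 * (ρ0 + ψ3 * MX * ρ1))
    (J : Set (ℝ × ℝ))
    (hJ : J = {st : ℝ × ℝ | ∃ s t : ℝ, |s| ≤ ψ3 * MX ∧
      t ∈ Set.Icc (Ag / Bg) (Bg / Ag) ∧ st = (s, t - 1)}) :
    (∀ p ∈ J, ∀ q ∈ J,
      |p.1 * ρ p.2 - q.1 * ρ q.2| ≤ (ψ6 / 2) * max |p.1 - q.1| |p.2 - q.2|) ∧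
    (∀ p ∈ J, |p.1 * ρ p.2| ≤ (ψ6 / 2) * min |p.1| |p.2|) := by
  obtain ⟨hdiff, hcont, hdcont⟩ := rho_props ρ hρ
  have hBg : 0 < Bg := hAg.trans hAB
  set K : Set ℝ := Set.Icc (Ag / Bg) (Bg / Ag) with hK
  have hab : Ag / Bg ≤ 1 := by
    rw [div_le_one hBg]; exact hAB.le
  have hba : 1 ≤ Bg / Ag := by
    rw [le_div_iff₀ hAg]; linarith
  have h1K : (1 : ℝ) ∈ K := ⟨hab, hba⟩
  have hpos : 0 < Ag / Bg := div_pos hAg hBg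
  have hmem : ∀ t ∈ K, t - 1 ∈ Ioi (-1 : ℝ) := by
    intro t ht
    have := ht.1
    simp only [mem_Ioi]; linarith
  -- bounds via suprema
  have hsubcont : ContinuousOn (fun t : ℝ => t - 1) K := by fun_prop
  have hmapsTo : Set.MapsTo (fun t : ℝ => t - 1) K (Ioi (-1 : ℝ)) := fun t ht => hmem t ht
  have hbdd0 : BddAbove (Set.range fun t : K => |ρ (t.1 - 1)|) := by
    have hc : ContinuousOn (fun t : ℝ => |ρ (t - 1)|) K :=
      ((hcont.comp hsubcont hmapsTo)).abs
    have := (isCompact_Icc.image_of_continuousOn hc).bddAbove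
    rwa [Set.image_eq_range] at this
  have hbdd1 : BddAbove (Set.range fun t : K => |deriv ρ (t.1 - 1)|) := by
    have hc : ContinuousOn (fun t : ℝ => |deriv ρ (t - 1)|) K :=
      ((hdcont.comp hsubcont hmapsTo)).abs
    have := (isCompact_Icc.image_of_continuousOn hc).bddAbove
    rwa [Set.image_eq_range] at this
  have hle0 : ∀ t ∈ K, |ρ (t - 1)| ≤ ρ0 := by
    intro t ht
    rw [hρ0]
    exact le_ciSup hbdd0 (⟨t, ht⟩ : K)
  have hle1 : ∀ t ∈ K, |deriv ρ (t - 1)| ≤ ρ1 := by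
    intro t ht
    rw [hρ1]
    exact le_ciSup hbdd1 (⟨t, ht⟩ : K)
  have hρ0nn : 0 ≤ ρ0 := le_trans (abs_nonneg _) (hle0 1 h1K)
  have hρ1nn : 0 ≤ ρ1 := le_trans (abs_nonneg _) (hle1 1 h1K)
  have hψ3pos : 0 < ψ3 := by
    rw [hψ3]
    apply div_pos _ hAg
    exact lt_min (by linarith) (by positivity)
  have hψ3MX : 0 ≤ ψ3 * MX := by positivity
  -- mean value inequality on s = Icc (Ag/Bg - 1) (Bg/Ag - 1)
  set S : Set ℝ := Set.Icc (Ag / Bg - 1) (Bg / Ag - 1) with hS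
  have hSsub : ∀ x ∈ S, x ∈ Ioi (-1 : ℝ) := by
    intro x hx; simp only [mem_Ioi]; have := hx.1; linarith
  have hSK : ∀ x ∈ S, x + 1 ∈ K := by
    intro x hx; exact ⟨by linarith [hx.1], by linarith [hx.2]⟩
  have hSdiff : ∀ x ∈ S, DifferentiableAt ℝ ρ x := fun x hx => hdiff x (hSsub x hx)
  have hSbound : ∀ x ∈ S, ‖deriv ρ x‖ ≤ ρ1 := by
    intro x hx
    have := hle1 (x + 1) (hSK x hx)
    simpa using this
  have hMVT : ∀ x ∈ S, ∀ y ∈ S, |ρ y - ρ x| ≤ ρ1 * |y - x| := by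
    intro x hx y hy
    exact Convex.norm_image_sub_le_of_norm_deriv_le hSdiff hSbound (convex_Icc _ _) hx hy
  have hSmem : ∀ t ∈ K, t - 1 ∈ S := by
    intro t ht; exact ⟨by linarith [ht.1], by linarith [ht.2]⟩
  have h0S : (0 : ℝ) ∈ S := ⟨by linarith, by linarith⟩
  have hρzero : ρ 0 = 0 := by simp [hρ 0]
  have hψ62 : ψ6 / 2 = ρ0 + ψ3 * MX * ρ1 := by rw [hψ6]; ring
  constructor
  · rintro p hp q hq
    rw [hJ] at hp hq
    obtain ⟨s, t, hs, ht, rfl⟩ := hp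
    obtain ⟨s', t', hs', ht', rfl⟩ := hq
    simp only
    set M : ℝ := max |s - s'| |t - 1 - (t' - 1)| with hM
    have hMeq : |t - 1 - (t' - 1)| = |t - t'| := by ring_nf
    have hM1 : |s - s'| ≤ M := le_max_left _ _
    have hM2 : |t - t'| ≤ M := hMeq ▸ le_max_right _ _
    have hMnn : 0 ≤ M := le_trans (abs_nonneg _) hM1
    have key : |s * ρ (t - 1) - s' * ρ (t' - 1)| ≤ ρ0 * M + ψ3 * MX * ρ1 * M := by
      have e : s * ρ (t - 1) - s' * ρ (t' - 1)
          = (s - s') * ρ (t - 1) + s' * (ρ (t - 1) - ρ (t' - 1)) := by ring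
      rw [e]
      calc |(s - s') * ρ (t - 1) + s' * (ρ (t - 1) - ρ (t' - 1))|
          ≤ |(s - s') * ρ (t - 1)| + |s' * (ρ (t - 1) - ρ (t' - 1))| := abs_add_le _ _
        _ = |s - s'| * |ρ (t - 1)| + |s'| * |ρ (t - 1) - ρ (t' - 1)| := by
            rw [abs_mul, abs_mul]
        _ ≤ M * ρ0 + (ψ3 * MX) * (ρ1 * |t - t'|) := by
            apply add_le_add
            · exact mul_le_mul hM1 (hle0 t ht) (abs_nonneg _) hMnn
            · refine mul_le_mul hs' ?_ (abs_nonneg _) hψ3MX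
              have := hMVT (t' - 1) (hSmem t' ht') (t - 1) (hSmem t ht)
              calc |ρ (t - 1) - ρ (t' - 1)| ≤ ρ1 * |t - 1 - (t' - 1)| := this
                _ = ρ1 * |t - t'| := by rw [hMeq]
        _ ≤ M * ρ0 + (ψ3 * MX) * (ρ1 * M) := by
            refine add_le_add_right (mul_le_mul_of_nonneg_left ?_ hψ3MX) _
            exact mul_le_mul_of_nonneg_left hM2 hρ1nn
        _ = ρ0 * M + ψ3 * MX * ρ1 * M := by ring
    rw [hψ62]
    calc |s * ρ (t - 1) - s' * ρ (t' - 1)| ≤ ρ0 * M + ψ3 * MX * ρ1 * M := key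
      _ = (ρ0 + ψ3 * MX * ρ1) * M := by ring
  · rintro p hp
    rw [hJ] at hp
    obtain ⟨s, t, hs, ht, rfl⟩ := hp
    simp only
    rw [abs_mul]
    have hA : |s| * |ρ (t - 1)| ≤ (ψ6 / 2) * |s| := by
      rw [hψ62, mul_comm]
      refine mul_le_mul_of_nonneg_right ?_ (abs_nonneg _)
      exact le_trans (hle0 t ht) (by nlinarith)
    have hB : |s| * |ρ (t - 1)| ≤ (ψ6 / 2) * |t - 1| := by
      have h1 : |ρ (t - 1)| ≤ ρ1 * |t - 1| := by
        have := hMVT 0 h0S (t - 1) (hSmem t ht)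
        simpa [hρzero] using this
      calc |s| * |ρ (t - 1)| ≤ (ψ3 * MX) * (ρ1 * |t - 1|) :=
            mul_le_mul hs h1 (abs_nonneg _) hψ3MX
        _ = (ψ3 * MX * ρ1) * |t - 1| := by ring
        _ ≤ (ψ6 / 2) * |t - 1| := by
            refine mul_le_mul_of_nonneg_right ?_ (abs_nonneg _)
            rw [hψ62]; nlinarith
    rcases min_cases |s| |t - 1| with ⟨hmin, _⟩ | ⟨hmin, _⟩
    · rw [hmin]; exact hA
    · rw [hmin]; exact hB
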